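/- Let $k,n\in\mathbb{N}$ with $n>2$ and let $R\in\mathbb{R}$ with $R>n$. Then there do not exist families $\mathcal{V}_1,\dots,\mathcal{V}_k$ of subsets of $\mathbb{Z}^k$ (with the maximum metric) such that each $\mathcal{V}_i$ is $n$-disjoint and $R$-bounded and $\bigcup_{i=1}^k \mathcal{V}_i$ covers $[-R,R]^k\cap\mathbb{Z}^k$. -/

import Mathlib

noncomputable section
open Metric Set
open scoped ENNReal

/-- A family of subsets is `R`-bounded if every member has diameter at most `R`. -/
def RBounded {X : Type*} [PseudoMetricSpace X] (R : ℝ) (U : Set (Set X)) : Prop :=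
  ∀ A ∈ U, ∀ x ∈ A, ∀ y ∈ A, dist x y ≤ R

/-- A family of subsets is `r`-disjoint if distinct members are at distance at least `r`. -/
def RDisjoint {X : Type*} [PseudoMetricSpace X] (r : ℝ) (U : Set (Set X)) : Prop :=
  ∀ A ∈ U, ∀ B ∈ U, A ≠ B → ∀ x ∈ A, ∀ y ∈ B, r ≤ dist x y

/-- A family of subsets is uniformly bounded if it is `R`-bounded for some `R`. -/
def UniformlyBounded {X : Type*} [PseudoMetricSpace X] (U : Set (Set X)) : Prop :=
  ∃ R : ℝ, RBounded R U

/-- `asdim X ≤ n`: for every `r > 0` there are `n+1` uniformly bounded, `r`-disjoint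
families of subsets of `X` whose union covers `X`. -/
def AsdimLE (X : Type*) [PseudoMetricSpace X] (n : ℕ) : Prop :=
  ∀ r : ℝ, 0 < r → ∃ U : Fin (n + 1) → Set (Set X),
    (∀ i, UniformlyBounded (U i)) ∧ (∀ i, RDisjoint r (U i)) ∧
    (Set.univ : Set X) ⊆ ⋃ i, ⋃₀ U i

namespace NoCoverAux
attribute [local instance] Classical.propDecidable
variable {k : ℕ}

def eV (y : Fin k → ℤ) {nn : ℕ} (d : Fin nn → Fin k) (t : ℕ) : Fin k → ℤ :=
  fun a => y a + if ∃ s : Fin nn, (s : ℕ) < t ∧ d s = a then 1 else 0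

lemma eV_def {y : Fin k → ℤ} {nn : ℕ} {d : Fin nn → Fin k} {t : ℕ} {a : Fin k} :
    eV y d t a = y a + if ∃ s : Fin nn, (s : ℕ) < t ∧ d s = a then 1 else 0 := rfl

lemma eV_zero {y : Fin k → ℤ} {nn : ℕ} {d : Fin nn → Fin k} : eV y d 0 = y := by
  funext a
  rw [eV_def, if_neg, add_zero]
  rintro ⟨s, hs, -⟩
  omega

lemma eV_le {y : Fin k → ℤ} {nn : ℕ} {d : Fin nn → Fin k} (t : ℕ) (a : Fin k) :
    y a ≤ eV y d t a := by
  rw [eV_def]; split <;> omega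

lemma eV_le' {y : Fin k → ℤ} {nn : ℕ} {d : Fin nn → Fin k} (t : ℕ) (a : Fin k) :
    eV y d t a ≤ y a + 1 := by
  rw [eV_def]; split <;> omega

lemma eV_not_mem {y : Fin k → ℤ} {nn : ℕ} {d : Fin nn → Fin k} {a : Fin k}
    (ha : a ∉ Set.range d) (t : ℕ) : eV y d t a = y a := by
  rw [eV_def, if_neg, add_zero]
  rintro ⟨s, -, rfl⟩
  exact ha ⟨s, rfl⟩

lemma eV_adj {y : Fin k → ℤ} {nn : ℕ} {d : Fin nn → Fin k} (t t' : ℕ) (a : Fin k) :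
    |eV y d t a - eV y d t' a| ≤ 1 := by
  have h1 := eV_le (y := y) (d := d) t a
  have h2 := eV_le' (y := y) (d := d) t a
  have h3 := eV_le (y := y) (d := d) t' a
  have h4 := eV_le' (y := y) (d := d) t' a
  rw [abs_le]; omega

lemma eV_apply_d {y : Fin k → ℤ} {nn : ℕ} {d : Fin nn → Fin k}
    (hinj : Function.Injective d) (s₀ : Fin nn) (t : ℕ) :
    eV y d t (d s₀) = y (d s₀) + if (s₀ : ℕ) < t then 1 else 0 := by
  rw [eV_def]
  congr 1
  by_cases h : (s₀ : ℕ) < t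
  · rw [if_pos h, if_pos ⟨s₀, h, rfl⟩]
  · rw [if_neg h, if_neg]
    rintro ⟨s, hs, hds⟩
    exact h (hinj hds ▸ hs)

/-- All the data of the labelling problem. -/
structure Setup (k : ℕ) where
  M : ℤ
  lab : (Fin k → ℤ) → Fin k × Bool
  hM : 1 ≤ M
  h1t : ∀ x : Fin k → ℤ, (∀ a, 0 ≤ x a ∧ x a ≤ M) → ∀ i, lab x = (i, true) → x i < M
  h1f : ∀ x : Fin k → ℤ, (∀ a, 0 ≤ x a ∧ x a ≤ M) → ∀ i, lab x = (i, false) → 0 < x i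
  h2 : ∀ x y : Fin k → ℤ, (∀ a, 0 ≤ x a ∧ x a ≤ M) → (∀ a, 0 ≤ y a ∧ y a ≤ M) →
    (∀ a, |x a - y a| ≤ 1) → ∀ i, lab x = (i, true) → lab y ≠ (i, false)

def Base (M : ℤ) (y : Fin k → ℤ) {nn : ℕ} (d : Fin nn → Fin k) : Prop :=
  Function.Injective d ∧ (∀ a, a ∉ Set.range d → y a = M) ∧
    (∀ a, a ∈ Set.range d → 0 ≤ y a ∧ y a ≤ M - 1)

lemma grid_eV {M : ℤ} {y : Fin k → ℤ} {nn : ℕ} {d : Fin nn → Fin k}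
    (hM : 1 ≤ M) (hb : Base M y d) (t : ℕ) :
    ∀ a, 0 ≤ eV y d t a ∧ eV y d t a ≤ M := by
  intro a
  have h1 := eV_le (y := y) (d := d) t a
  have h2 := eV_le' (y := y) (d := d) t a
  by_cases ha : a ∈ Set.range d
  · have := hb.2.2 a ha; omega
  · have := hb.2.1 a ha
    have := eV_not_mem (y := y) ha t
    omega

/-- Doors: one vertex (number `t`) dropped, the labels of the remaining vertices are
all minus labels hitting each direction in `range d` exactly once. -/
structure Door (S : Setup k) (y : Fin k → ℤ) {nn : ℕ} (d : Fin nn → Fin k) (t : ℕ) : Prop where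
  tle : t ≤ nn
  hbase : Base S.M y d
  minus : ∀ s, s ≤ nn → s ≠ t → (S.lab (eV y d s)).2 = false
  inj : ∀ s, s ≤ nn → s ≠ t → ∀ s', s' ≤ nn → s' ≠ t →
    (S.lab (eV y d s)).1 = (S.lab (eV y d s')).1 → s = s'
  mem : ∀ s, s ≤ nn → s ≠ t → (S.lab (eV y d s)).1 ∈ Set.range d
  onto : ∀ a, a ∈ Set.range d → ∃ s, s ≤ nn ∧ s ≠ t ∧ (S.lab (eV y d s)).1 = a

/-- Full elements: labels of all vertices are minus labels hitting each direction in
`{m} ∪ range d` exactly once. -/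
structure AE (S : Setup k) (m : Fin k) (y : Fin k → ℤ) {nn : ℕ} (d : Fin nn → Fin k) : Prop where
  hbase : Base S.M y d
  mnotin : m ∉ Set.range d
  minus : ∀ s, s ≤ nn → (S.lab (eV y d s)).2 = false
  inj : ∀ s, s ≤ nn → ∀ s', s' ≤ nn →
    (S.lab (eV y d s)).1 = (S.lab (eV y d s')).1 → s = s'
  mem : ∀ s, s ≤ nn → (S.lab (eV y d s)).1 ∈ insert m (Set.range d)
  onto : ∀ a, a ∈ insert m (Set.range d) → ∃ s, s ≤ nn ∧ (S.lab (eV y d s)).1 = a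

def Dt (S : Setup k) (nn : ℕ) : Type :=
  {p : (Fin k → ℤ) × (Fin nn → Fin k) × ℕ // Door S p.1 p.2.1 p.2.2}

def At (S : Setup k) (nn : ℕ) : Type :=
  {p : Fin k × (Fin k → ℤ) × (Fin nn → Fin k) // AE S p.1 p.2.1 p.2.2}

lemma y_bounds {S : Setup k} {y : Fin k → ℤ} {nn : ℕ} {d : Fin nn → Fin k}
    (hb : Base S.M y d) (a : Fin k) : 0 ≤ y a ∧ y a ≤ S.M := by
  have hM := S.hM
  by_cases ha : a ∈ Set.range d
  · have := hb.2.2 a ha; omega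
  · have := hb.2.1 a ha; omega

instance finiteDt (S : Setup k) (nn : ℕ) : Finite (Dt S nn) := by
  apply Finite.of_injective
    (f := fun q : Dt S nn =>
      ((fun a => (⟨(q.val.1 a).toNat, by
          have h := y_bounds q.prop.hbase a
          have : (q.val.1 a).toNat ≤ S.M.toNat := Int.toNat_le_toNat h.2
          omega⟩ : Fin (S.M.toNat + 1))),
        q.val.2.1,
        (⟨q.val.2.2, Nat.lt_succ_of_le q.prop.tle⟩ : Fin (nn + 1))))
  intro q q' he
  simp only [Prod.mk.injEq] at he
  obtain ⟨he1, he2, he3⟩ := he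
  apply Subtype.ext
  refine Prod.ext ?_ (Prod.ext he2 ?_)
  · funext a
    have hco := congrFun he1 a
    simp only [Fin.mk.injEq] at hco
    have hy := (y_bounds q.prop.hbase a).1
    have hy' := (y_bounds q'.prop.hbase a).1
    omega
  · simpa using congrArg Fin.val he3

instance finiteAt (S : Setup k) (nn : ℕ) : Finite (At S nn) := by
  apply Finite.of_injective
    (f := fun q : At S nn =>
      (q.val.1,
       (fun a => (⟨(q.val.2.1 a).toNat, by
          have h := y_bounds q.prop.hbase a
          have : (q.val.2.1 a).toNat ≤ S.M.toNat := Int.toNat_le_toNat h.2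
          omega⟩ : Fin (S.M.toNat + 1))),
        q.val.2.2))
  intro q q' he
  simp only [Prod.mk.injEq] at he
  obtain ⟨he1, he2, he3⟩ := he
  apply Subtype.ext
  refine Prod.ext he1 (Prod.ext ?_ he3)
  funext a
  have hco := congrFun he2 a
  simp only [Fin.mk.injEq] at hco
  have hy := (y_bounds q.prop.hbase a).1
  have hy' := (y_bounds q'.prop.hbase a).1
  omega

lemma even_card_of_invol {α : Type} [Finite α] (f : α → α)
    (hinv : ∀ a, f (f a) = a) (hne : ∀ a, f a ≠ a) : Even (Nat.card α) := by
  cases nonempty_fintype α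
  rw [Nat.card_eq_fintype_card]
  have hs : (Finset.univ.sum (fun _ : α => (1 : ZMod 2))) = 0 := by
    apply Finset.sum_involution (fun a _ => f a)
    · intro a _; decide
    · intro a _ _; exact hne a
    · intro a _; exact Finset.mem_univ _
    · intro a _; exact hinv a
  rw [Finset.sum_const, nsmul_eq_mul, mul_one] at hs
  have h2 : (2 : ℕ) ∣ Fintype.card α := by
    have := (ZMod.natCast_eq_zero_iff (Fintype.card α) 2).mp ?_
    · exact this
    · simpa using hs
  exact even_iff_two_dvd.mpr h2

lemma even_sum_transfer {α β : Type} [Finite α] [Finite β]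
    (h : Even (Nat.card (α ⊕ β))) : (Even (Nat.card α) ↔ Even (Nat.card β)) := by
  rw [Nat.card_sum] at h
  exact Nat.even_add.mp h

lemma card_At_top (S : Setup k) : Nat.card (At S k) = 0 := by
  have : IsEmpty (At S k) := by
    constructor
    rintro ⟨⟨m, y, d⟩, h⟩
    have hsurj : Function.Surjective d := Finite.injective_iff_surjective.mp h.hbase.1
    exact h.mnotin (hsurj m)
  exact Nat.card_of_isEmpty

lemma eV_elim0 {y : Fin k → ℤ} {d : Fin 0 → Fin k} (t : ℕ) : eV y d t = y := by
  funext a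
  rw [eV_def, if_neg, add_zero]
  rintro ⟨s, -, -⟩
  exact s.elim0

lemma card_At_zero (S : Setup k) : Nat.card (At S 0) = 1 := by
  have hyc : ∀ a : Fin k, 0 ≤ (fun _ : Fin k => S.M) a ∧ (fun _ : Fin k => S.M) a ≤ S.M := by
    intro a
    refine ⟨?_, le_rfl⟩
    show (0:ℤ) ≤ S.M
    have := S.hM
    omega
  have hsnd : (S.lab (fun _ => S.M)).2 = false := by
    cases hb : (S.lab (fun _ => S.M)).2
    · rfl
    · exfalso
      have hlab : S.lab (fun _ => S.M) = ((S.lab (fun _ => S.M)).1, true) :=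
        Prod.ext rfl hb
      have := S.h1t (fun _ => S.M) hyc _ hlab
      simp at this
  rw [Nat.card_eq_one_iff_unique]
  constructor
  · constructor
    rintro ⟨⟨m, y, d⟩, h⟩ ⟨⟨m', y', d'⟩, h'⟩
    have hd : d = d' := Subsingleton.elim _ _
    have hy : y = fun _ => S.M := by
      funext a
      exact h.hbase.2.1 a (by rintro ⟨s, -⟩; exact s.elim0)
    have hy' : y' = fun _ => S.M := by
      funext a
      exact h'.hbase.2.1 a (by rintro ⟨s, -⟩; exact s.elim0)
    have hm : m = (S.lab (fun _ => S.M)).1 := by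
      have := h.mem 0 le_rfl
      rw [eV_elim0, hy] at this
      rcases Set.mem_insert_iff.mp this with he | he
      · exact he.symm
      · exact absurd he (by rintro ⟨s, -⟩; exact s.elim0)
    have hm' : m' = (S.lab (fun _ => S.M)).1 := by
      have := h'.mem 0 le_rfl
      rw [eV_elim0, hy'] at this
      rcases Set.mem_insert_iff.mp this with he | he
      · exact he.symm
      · exact absurd he (by rintro ⟨s, -⟩; exact s.elim0)
    apply Subtype.ext
    exact Prod.ext (hm.trans hm'.symm) (Prod.ext (hy.trans hy'.symm) hd)
  · refine ⟨⟨((S.lab (fun _ => S.M)).1, (fun _ => S.M), Fin.elim0), ?_⟩⟩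
    constructor
    · refine ⟨fun s => s.elim0, fun a _ => rfl, ?_⟩
      rintro a ⟨s, -⟩; exact s.elim0
    · rintro ⟨s, -⟩; exact s.elim0
    · intro s _
      rw [eV_elim0]
      exact hsnd
    · intro s hs s' hs' _
      omega
    · intro s _
      rw [eV_elim0]
      exact Set.mem_insert _ _
    · intro a ha
      rcases Set.mem_insert_iff.mp ha with he | he
      · exact ⟨0, le_rfl, by rw [eV_elim0, he]⟩
      · exact absurd he (by rintro ⟨s, -⟩; exact s.elim0)


section rot
variable {nn : ℕ}

def rotL (d : Fin (nn+1) → Fin k) : Fin (nn+1) → Fin k := d ∘ (finRotate (nn+1))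
def rotR (d : Fin (nn+1) → Fin k) : Fin (nn+1) → Fin k := d ∘ (finRotate (nn+1)).symm

lemma rotL_rotR (d : Fin (nn+1) → Fin k) : rotL (rotR d) = d := by
  funext s; exact congrArg d ((finRotate (nn+1)).symm_apply_apply s)

lemma rotR_rotL (d : Fin (nn+1) → Fin k) : rotR (rotL d) = d := by
  funext s; exact congrArg d ((finRotate (nn+1)).apply_symm_apply s)

lemma range_rotL (d : Fin (nn+1) → Fin k) : Set.range (rotL d) = Set.range d :=
  (finRotate (nn+1)).surjective.range_comp d

lemma range_rotR (d : Fin (nn+1) → Fin k) : Set.range (rotR d) = Set.range d :=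
  (finRotate (nn+1)).symm.surjective.range_comp d

lemma inj_rotL {d : Fin (nn+1) → Fin k} (h : Function.Injective d) :
    Function.Injective (rotL d) := h.comp (finRotate (nn+1)).injective

lemma inj_rotR {d : Fin (nn+1) → Fin k} (h : Function.Injective d) :
    Function.Injective (rotR d) := h.comp (finRotate (nn+1)).symm.injective

lemma finRotate_val_lt {s : Fin (nn+1)} (h : (s : ℕ) < nn) :
    finRotate (nn+1) s = ⟨(s : ℕ) + 1, by omega⟩ := by
  rw [finRotate_succ_apply]
  apply Fin.ext
  rw [Fin.val_add_one, if_neg]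
  intro he
  have := congrArg Fin.val he
  simp [Fin.last] at this
  omega

lemma finRotate_val_last :
    finRotate (nn+1) ⟨nn, by omega⟩ = 0 := by
  rw [finRotate_succ_apply]
  have h : (⟨nn, by omega⟩ : Fin (nn+1)) = Fin.last nn := rfl
  rw [h, Fin.last_add_one]

lemma rotL_apply_lt {d : Fin (nn+1) → Fin k} {s : Fin (nn+1)} (h : (s : ℕ) < nn) :
    rotL d s = d ⟨(s : ℕ) + 1, by omega⟩ := by
  unfold rotL
  simp only [Function.comp_apply, finRotate_val_lt h]

lemma rotL_apply_last {d : Fin (nn+1) → Fin k} :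
    rotL d ⟨nn, by omega⟩ = d 0 := by
  unfold rotL
  simp only [Function.comp_apply, finRotate_val_last]

lemma finRotate_symm_zero :
    (finRotate (nn+1)).symm 0 = ⟨nn, by omega⟩ := by
  rw [Equiv.symm_apply_eq, finRotate_val_last]

lemma finRotate_symm_pos {s : Fin (nn+1)} (h : 0 < (s : ℕ)) :
    (finRotate (nn+1)).symm s = ⟨(s : ℕ) - 1, by omega⟩ := by
  rw [Equiv.symm_apply_eq]
  have hlt : ((⟨(s : ℕ) - 1, by omega⟩ : Fin (nn+1)) : ℕ) < nn := by
    show (s : ℕ) - 1 < nn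
    omega
  rw [finRotate_val_lt hlt]
  apply Fin.ext
  show (s : ℕ) = (s : ℕ) - 1 + 1
  omega

lemma rotR_apply_zero {d : Fin (nn+1) → Fin k} :
    rotR d 0 = d ⟨nn, by omega⟩ := by
  unfold rotR
  simp only [Function.comp_apply, finRotate_symm_zero]

lemma rotR_apply_pos {d : Fin (nn+1) → Fin k} {s : Fin (nn+1)} (h : 0 < (s : ℕ)) :
    rotR d s = d ⟨(s : ℕ) - 1, by omega⟩ := by
  unfold rotR
  simp only [Function.comp_apply, finRotate_symm_pos h]

end rot

section ident
variable {y : Fin k → ℤ} {nn : ℕ} {d : Fin (nn+1) → Fin k}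

lemma eV_one (a : Fin k) : eV y d 1 a = y a + if d 0 = a then 1 else 0 := by
  rw [eV_def]
  congr 1
  apply if_congr ?_ rfl rfl
  constructor
  · rintro ⟨s₀, hs₀, h⟩
    have : s₀ = 0 := by
      apply Fin.ext
      simp only [Fin.val_zero]
      omega
    rwa [this] at h
  · intro h
    exact ⟨0, by simp only [Fin.val_zero]; omega, h⟩

lemma eV_shift (hinj : Function.Injective d) (s : ℕ) (a : Fin k) :
    eV (eV y d 1) (d ∘ Fin.succ) s a = eV y d (s + 1) a := by
  rw [eV_def (d := d ∘ Fin.succ), eV_one, eV_def (d := d)]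
  by_cases h0 : d 0 = a
  · have hneg : ¬ ∃ s' : Fin nn, (s' : ℕ) < s ∧ (d ∘ Fin.succ) s' = a := by
      rintro ⟨s', hs', h⟩
      exact Fin.succ_ne_zero s' (hinj (h.trans h0.symm))
    rw [if_pos h0, if_neg hneg, if_pos ⟨0, by simp only [Fin.val_zero]; omega, h0⟩]
    ring
  · rw [if_neg h0, add_zero]
    congr 1
    apply if_congr ?_ rfl rfl
    constructor
    · rintro ⟨s', hs', h⟩
      exact ⟨s'.succ, by simpa using Nat.succ_lt_succ hs', h⟩
    · rintro ⟨s'', hs'', h⟩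
      induction s'' using Fin.cases with
      | zero => exact absurd h h0
      | succ i => exact ⟨i, by simpa using hs'', h⟩

lemma eV_rotL (hinj : Function.Injective d) {s : ℕ} (hs : s ≤ nn) (a : Fin k) :
    eV (eV y d 1) (rotL d) s a = eV y d (s + 1) a := by
  rw [eV_def (d := rotL d), eV_one, eV_def (d := d)]
  by_cases h0 : d 0 = a
  · have hneg : ¬ ∃ s' : Fin (nn+1), (s' : ℕ) < s ∧ rotL d s' = a := by
      rintro ⟨s', hs', h⟩
      rw [rotL_apply_lt (by omega)] at h
      have h2 := congrArg Fin.val (hinj (h.trans h0.symm))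
      simp at h2
    rw [if_pos h0, if_neg hneg, if_pos ⟨0, by simp only [Fin.val_zero]; omega, h0⟩]
    ring
  · rw [if_neg h0, add_zero]
    congr 1
    apply if_congr ?_ rfl rfl
    constructor
    · rintro ⟨s', hs', h⟩
      rw [rotL_apply_lt (by omega)] at h
      refine ⟨⟨(s' : ℕ) + 1, by omega⟩, ?_, h⟩
      show (s' : ℕ) + 1 < s + 1
      omega
    · rintro ⟨s'', hs'', h⟩
      have hne : (s'' : ℕ) ≠ 0 := by
        intro hz
        exact h0 (by rwa [show s'' = 0 from Fin.ext hz] at h)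
      refine ⟨⟨(s'' : ℕ) - 1, by omega⟩, ?_, ?_⟩
      · show (s'' : ℕ) - 1 < s
        omega
      · rw [rotL_apply_lt (by show (s'':ℕ) - 1 < nn; omega)]
        convert h using 2
        apply Fin.ext
        show (s'' : ℕ) - 1 + 1 = (s'' : ℕ)
        omega

lemma eV_rotR (hinj : Function.Injective d) {s : ℕ} (hs1 : 1 ≤ s) (hs2 : s ≤ nn + 1)
    (a : Fin k) :
    eV (fun b => if b = d ⟨nn, by omega⟩ then y b - 1 else y b) (rotR d) s a
      = eV y d (s - 1) a := by
  rw [eV_def (d := rotR d), eV_def (d := d)]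
  by_cases h0 : a = d ⟨nn, by omega⟩
  · have hneg : ¬ ∃ s'' : Fin (nn+1), (s'' : ℕ) < s - 1 ∧ d s'' = a := by
      rintro ⟨s'', hs'', h⟩
      have he : s'' = ⟨nn, by omega⟩ := hinj (h.trans h0)
      rw [he] at hs''
      have : (⟨nn, by omega⟩ : Fin (nn+1)).val = nn := rfl
      omega
    rw [if_pos h0, if_neg hneg, if_pos ⟨0, by simp only [Fin.val_zero]; omega, by rw [rotR_apply_zero, h0]⟩]
    ring
  · rw [if_neg h0]
    congr 1
    apply if_congr ?_ rfl rfl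
    constructor
    · rintro ⟨s', hs', h⟩
      by_cases hz : (s' : ℕ) = 0
      · rw [show s' = 0 from Fin.ext hz, rotR_apply_zero] at h
        exact absurd h.symm h0
      · rw [rotR_apply_pos (by omega)] at h
        refine ⟨⟨(s' : ℕ) - 1, by omega⟩, ?_, h⟩
        show (s' : ℕ) - 1 < s - 1
        omega
    · rintro ⟨s'', hs'', h⟩
      refine ⟨⟨(s'' : ℕ) + 1, by omega⟩, ?_, ?_⟩
      · show (s'' : ℕ) + 1 < s
        omega
      · rw [rotR_apply_pos (by show 0 < (s'':ℕ)+1; omega)]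
        convert h using 2
        exact Fin.ext (Nat.add_sub_cancel _ _)

end ident

section swapcons
variable {y : Fin k → ℤ} {nn : ℕ}

lemma eV_swap {d : Fin nn → Fin k} {u w : Fin nn} {s : ℕ}
    (h : (s ≤ (u : ℕ) ∧ s ≤ (w : ℕ)) ∨ ((u : ℕ) < s ∧ (w : ℕ) < s)) (a : Fin k) :
    eV y (d ∘ Equiv.swap u w) s a = eV y d s a := by
  have key : ∀ s' : Fin nn, (s' : ℕ) < s → ((Equiv.swap u w s' : Fin nn) : ℕ) < s := by
    intro s' hs'
    rcases h with ⟨h1, h2⟩ | ⟨h1, h2⟩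
    · rw [Equiv.swap_apply_of_ne_of_ne
        (by intro he; rw [he] at hs'; omega) (by intro he; rw [he] at hs'; omega)]
      exact hs'
    · by_cases e1 : s' = u
      · rw [e1, Equiv.swap_apply_left]; omega
      · by_cases e2 : s' = w
        · rw [e2, Equiv.swap_apply_right]; omega
        · rw [Equiv.swap_apply_of_ne_of_ne e1 e2]; exact hs'
  rw [eV_def, eV_def]
  congr 1
  apply if_congr ?_ rfl rfl
  constructor
  · rintro ⟨s', hs', hd⟩
    exact ⟨Equiv.swap u w s', key s' hs', hd⟩
  · rintro ⟨s', hs', hd⟩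
    exact ⟨Equiv.swap u w s', key s' hs', by
      show d (Equiv.swap u w (Equiv.swap u w s')) = a
      rwa [Equiv.swap_apply_self]⟩

lemma eV_cons {d' : Fin nn → Fin k} {m : Fin k} {M : ℤ} {yA : Fin k → ℤ}
    (hm : m ∉ Set.range d') (hyM : yA m = M) (s : ℕ) (a : Fin k) :
    eV (fun b => if b = m then M - 1 else yA b) (Fin.cons m d') (s + 1) a = eV yA d' s a := by
  rw [eV_def (d := Fin.cons m d'), eV_def (d := d')]
  by_cases h0 : a = m
  · have hneg : ¬ ∃ s' : Fin nn, (s' : ℕ) < s ∧ d' s' = a := by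
      rintro ⟨s', hs', h⟩
      exact hm ⟨s', by rw [h, h0]⟩
    rw [if_pos h0, if_neg hneg, if_pos ⟨0, by simp only [Fin.val_zero]; omega, by rw [Fin.cons_zero, h0]⟩]
    rw [h0, hyM]
    ring
  · rw [if_neg h0]
    congr 1
    apply if_congr ?_ rfl rfl
    constructor
    · rintro ⟨s'', hs'', h⟩
      induction s'' using Fin.cases with
      | zero => rw [Fin.cons_zero] at h; exact absurd h.symm h0
      | succ i =>
        rw [Fin.cons_succ] at h
        exact ⟨i, by simpa using hs'', h⟩
    · rintro ⟨s', hs', h⟩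
      exact ⟨s'.succ, by simpa using Nat.succ_lt_succ hs', by rwa [Fin.cons_succ]⟩

end swapcons

section Par1
variable {S : Setup k} {nn : ℕ} {y : Fin k → ℤ} {d : Fin nn → Fin k} {t : ℕ}

lemma door_snd_false (hD : Door S y d t) : (S.lab (eV y d t)).2 = false := by
  cases hb : (S.lab (eV y d t)).2
  · rfl
  · exfalso
    have hlab : S.lab (eV y d t) = ((S.lab (eV y d t)).1, true) := Prod.ext rfl hb
    by_cases hbr : (S.lab (eV y d t)).1 ∈ Set.range d
    · obtain ⟨s, hsle, hsnt, hfst⟩ := hD.onto _ hbr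
      have hlabs : S.lab (eV y d s) = ((S.lab (eV y d t)).1, false) :=
        Prod.ext hfst (hD.minus s hsle hsnt)
      exact S.h2 (eV y d t) (eV y d s) (grid_eV S.hM hD.hbase t) (grid_eV S.hM hD.hbase s)
        (eV_adj t s) _ hlab hlabs
    · have h1 : eV y d t ((S.lab (eV y d t)).1) = S.M := by
        rw [eV_not_mem hbr]
        exact hD.hbase.2.1 _ hbr
      have h2 := S.h1t (eV y d t) (grid_eV S.hM hD.hbase t) _ hlab
      omega

lemma door_move (hD : Door S y d t) {s₀ : ℕ} (hs₀ : s₀ ≤ nn) (hnet : s₀ ≠ t)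
    (hfst : (S.lab (eV y d s₀)).1 = (S.lab (eV y d t)).1) : Door S y d s₀ := by
  constructor
  case tle => exact hs₀
  case hbase => exact hD.hbase
  case minus =>
    intro s hs hss₀
    by_cases hst : s = t
    · rw [hst]; exact door_snd_false hD
    · exact hD.minus s hs hst
  case inj =>
    intro s hs hss₀ s' hs' hs's₀ heq
    by_cases hst : s = t <;> by_cases hs't : s' = t
    · rw [hst, hs't]
    · exfalso
      subst hst
      exact hs's₀ (hD.inj s' hs' hs't s₀ hs₀ hnet (heq.symm.trans hfst.symm))
    · exfalso
      subst hs't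
      exact hss₀ (hD.inj s hs hst s₀ hs₀ hnet (heq.trans hfst.symm))
    · exact hD.inj s hs hst s' hs' hs't heq
  case mem =>
    intro s hs hss₀
    by_cases hst : s = t
    · subst hst
      exact hfst ▸ hD.mem s₀ hs₀ hnet
    · exact hD.mem s hs hst
  case onto =>
    intro a ha
    obtain ⟨s, hs, hst, h⟩ := hD.onto a ha
    by_cases hss₀ : s = s₀
    · exact ⟨t, hD.tle, Ne.symm hnet, hfst.symm.trans (hss₀ ▸ h)⟩
    · exact ⟨s, hs, hss₀, h⟩

lemma door_to_AE (hD : Door S y d t) (hbr : (S.lab (eV y d t)).1 ∉ Set.range d) :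
    AE S (S.lab (eV y d t)).1 y d := by
  constructor
  case hbase => exact hD.hbase
  case mnotin => exact hbr
  case minus =>
    intro s hs
    by_cases hst : s = t
    · rw [hst]; exact door_snd_false hD
    · exact hD.minus s hs hst
  case inj =>
    intro s hs s' hs' heq
    by_cases hst : s = t <;> by_cases hs't : s' = t
    · rw [hst, hs't]
    · exfalso
      subst hst
      exact hbr (heq ▸ hD.mem s' hs' hs't)
    · exfalso
      subst hs't
      exact hbr (heq ▸ hD.mem s hs hst)
    · exact hD.inj s hs hst s' hs' hs't heq
  case mem =>
    intro s hs
    by_cases hst : s = t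
    · rw [hst]; exact Set.mem_insert _ _
    · exact Set.mem_insert_of_mem _ (hD.mem s hs hst)
  case onto =>
    intro a ha
    rcases Set.mem_insert_iff.mp ha with he | he
    · exact ⟨t, hD.tle, he.symm⟩
    · obtain ⟨s, hs, -, h⟩ := hD.onto a he
      exact ⟨s, hs, h⟩

lemma AE_to_door {m : Fin k} (hA : AE S m y d) (ht : t ≤ nn)
    (hfst : (S.lab (eV y d t)).1 = m) : Door S y d t := by
  constructor
  case tle => exact ht
  case hbase => exact hA.hbase
  case minus => intro s hs _; exact hA.minus s hs
  case inj => intro s hs _ s' hs' _ heq; exact hA.inj s hs s' hs' heq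
  case mem =>
    intro s hs hst
    rcases Set.mem_insert_iff.mp (hA.mem s hs) with he | he
    · exact absurd (hA.inj s hs t ht (he.trans hfst.symm)) hst
    · exact he
  case onto =>
    intro a ha
    obtain ⟨s, hs, h⟩ := hA.onto a (Set.mem_insert_of_mem _ ha)
    refine ⟨s, hs, ?_, h⟩
    intro he
    subst he
    exact hA.mnotin ((h.symm.trans hfst) ▸ ha)

/-- The label-based pairing between doors and full elements at the same level. -/
noncomputable def p1F (S : Setup k) (nn : ℕ) : (Dt S nn ⊕ At S nn) → (Dt S nn ⊕ At S nn) := fun z =>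
  match z with
  | Sum.inl q =>
    if hb : (S.lab (eV q.val.1 q.val.2.1 q.val.2.2)).1 ∈ Set.range q.val.2.1 then
      Sum.inl ⟨(q.val.1, q.val.2.1, Classical.choose (q.prop.onto _ hb)),
        door_move q.prop (Classical.choose_spec (q.prop.onto _ hb)).1
          (Classical.choose_spec (q.prop.onto _ hb)).2.1
          (Classical.choose_spec (q.prop.onto _ hb)).2.2⟩
    else
      Sum.inr ⟨((S.lab (eV q.val.1 q.val.2.1 q.val.2.2)).1, q.val.1, q.val.2.1),
        door_to_AE q.prop hb⟩
  | Sum.inr q =>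
    Sum.inl ⟨(q.val.2.1, q.val.2.2,
        Classical.choose (q.prop.onto q.val.1 (Set.mem_insert _ _))),
      AE_to_door q.prop (Classical.choose_spec (q.prop.onto q.val.1 (Set.mem_insert _ _))).1
        (Classical.choose_spec (q.prop.onto q.val.1 (Set.mem_insert _ _))).2⟩

lemma p1F_invol (S : Setup k) (nn : ℕ) (z : Dt S nn ⊕ At S nn) :
    p1F S nn (p1F S nn z) = z := by
  rcases z with q | q
  · by_cases hb : (S.lab (eV q.val.1 q.val.2.1 q.val.2.2)).1 ∈ Set.range q.val.2.1
    · rw [show p1F S nn (Sum.inl q) = Sum.inl ⟨(q.val.1, q.val.2.1,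
          Classical.choose (q.prop.onto _ hb)),
          door_move q.prop (Classical.choose_spec (q.prop.onto _ hb)).1
            (Classical.choose_spec (q.prop.onto _ hb)).2.1
            (Classical.choose_spec (q.prop.onto _ hb)).2.2⟩ from by
        simp only [p1F]; rw [dif_pos hb]]
      set s₀ := Classical.choose (q.prop.onto _ hb) with hs₀def
      obtain ⟨hs₀le, hs₀ne, hs₀fst⟩ := Classical.choose_spec (q.prop.onto _ hb)
      have hb2 : (S.lab (eV q.val.1 q.val.2.1 s₀)).1 ∈ Set.range q.val.2.1 := by
        rw [hs₀fst]; exact hb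
      simp only [p1F]
      rw [dif_pos hb2]
      set hD' := door_move q.prop hs₀le hs₀ne hs₀fst
      obtain ⟨h2le, h2ne, h2fst⟩ := Classical.choose_spec (hD'.onto _ hb2)
      have hchoose : Classical.choose (hD'.onto _ hb2) = q.val.2.2 :=
        hD'.inj _ h2le h2ne q.val.2.2 q.prop.tle (Ne.symm hs₀ne)
          (h2fst.trans hs₀fst)
      congr 1
      apply Subtype.ext
      exact Prod.ext rfl (Prod.ext rfl hchoose)
    · rw [show p1F S nn (Sum.inl q) = Sum.inr ⟨((S.lab (eV q.val.1 q.val.2.1 q.val.2.2)).1,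
          q.val.1, q.val.2.1), door_to_AE q.prop hb⟩ from by
        simp only [p1F]; rw [dif_neg hb]]
      set hA := door_to_AE q.prop hb
      simp only [p1F]
      obtain ⟨h3le, h3fst⟩ :=
        Classical.choose_spec (hA.onto (S.lab (eV q.val.1 q.val.2.1 q.val.2.2)).1
          (Set.mem_insert _ _))
      have hchoose : Classical.choose (hA.onto (S.lab (eV q.val.1 q.val.2.1 q.val.2.2)).1
          (Set.mem_insert _ _)) = q.val.2.2 :=
        hA.inj _ h3le q.val.2.2 q.prop.tle h3fst
      congr 1
      apply Subtype.ext
      exact Prod.ext rfl (Prod.ext rfl hchoose)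
  · simp only [p1F]
    obtain ⟨h1le, h1fst⟩ :=
      Classical.choose_spec (q.prop.onto q.val.1 (Set.mem_insert _ _))
    have hb : ¬ ((S.lab (eV q.val.2.1 q.val.2.2
        (Classical.choose (q.prop.onto q.val.1 (Set.mem_insert _ _))))).1
          ∈ Set.range q.val.2.2) := by
      rw [h1fst]; exact q.prop.mnotin
    rw [dif_neg hb]
    congr 1
    apply Subtype.ext
    exact Prod.ext h1fst (Prod.ext rfl rfl)

lemma p1F_ne (S : Setup k) (nn : ℕ) (z : Dt S nn ⊕ At S nn) : p1F S nn z ≠ z := by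
  rcases z with q | q
  · by_cases hb : (S.lab (eV q.val.1 q.val.2.1 q.val.2.2)).1 ∈ Set.range q.val.2.1
    · rw [show p1F S nn (Sum.inl q) = Sum.inl ⟨(q.val.1, q.val.2.1,
          Classical.choose (q.prop.onto _ hb)),
          door_move q.prop (Classical.choose_spec (q.prop.onto _ hb)).1
            (Classical.choose_spec (q.prop.onto _ hb)).2.1
            (Classical.choose_spec (q.prop.onto _ hb)).2.2⟩ from by
        simp only [p1F]; rw [dif_pos hb]]
      intro he
      have hv := congrArg (fun w : Dt S nn ⊕ At S nn =>
        match w with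
        | Sum.inl r => r.val.2.2
        | Sum.inr _ => 0) he
      simp only at hv
      exact (Classical.choose_spec (q.prop.onto _ hb)).2.1 hv
    · rw [show p1F S nn (Sum.inl q) = Sum.inr ⟨((S.lab (eV q.val.1 q.val.2.1 q.val.2.2)).1,
          q.val.1, q.val.2.1), door_to_AE q.prop hb⟩ from by
        simp only [p1F]; rw [dif_neg hb]]
      exact fun he => Sum.inr_ne_inl he
  · simp only [p1F]
    exact fun he => Sum.inl_ne_inr he

lemma par1 (S : Setup k) (nn : ℕ) : Even (Nat.card (Dt S nn ⊕ At S nn)) :=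
  even_card_of_invol (p1F S nn) (p1F_invol S nn) (p1F_ne S nn)

end Par1

section Par2
variable {S : Setup k} {nn : ℕ} {y : Fin k → ℤ} {d : Fin (nn+1) → Fin k}

lemma door_swap {t : ℕ} (hD : Door S y d t) (h1 : 1 ≤ t) (h2 : t ≤ nn) :
    Door S y (d ∘ Equiv.swap (⟨t-1, by omega⟩ : Fin (nn+1)) ⟨t, by omega⟩) t := by
  set u : Fin (nn+1) := ⟨t-1, by omega⟩ with hu
  set w : Fin (nn+1) := ⟨t, by omega⟩ with hw
  have hEv : ∀ s : ℕ, s ≠ t → eV y (d ∘ Equiv.swap u w) s = eV y d s := by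
    intro s hst
    funext a
    apply eV_swap (u := u) (w := w) ?_ a
    have hu' : (u : ℕ) = t - 1 := rfl
    have hw' : (w : ℕ) = t := rfl
    omega
  have hrange : Set.range (d ∘ Equiv.swap u w) = Set.range d :=
    (Equiv.swap u w).surjective.range_comp d
  constructor
  case tle => exact hD.tle
  case hbase =>
    exact ⟨hD.hbase.1.comp (Equiv.swap u w).injective,
      fun a ha => hD.hbase.2.1 a (hrange ▸ ha),
      fun a ha => hD.hbase.2.2 a (hrange ▸ ha)⟩
  case minus => intro s hs hst; rw [hEv s hst]; exact hD.minus s hs hst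
  case inj =>
    intro s hs hst s' hs' hs't heq
    rw [hEv s hst, hEv s' hs't] at heq
    exact hD.inj s hs hst s' hs' hs't heq
  case mem =>
    intro s hs hst
    rw [hEv s hst, hrange]
    exact hD.mem s hs hst
  case onto =>
    intro a ha
    rw [hrange] at ha
    obtain ⟨s, hs, hst, h⟩ := hD.onto a ha
    exact ⟨s, hs, hst, by rw [hEv s hst]; exact h⟩

lemma door_rotL (hD : Door S y d 0) (hb2 : y (d 0) ≤ S.M - 2) :
    Door S (eV y d 1) (rotL d) (nn+1) := by
  have hinj := hD.hbase.1
  have hEv : ∀ s : ℕ, s ≤ nn → eV (eV y d 1) (rotL d) s = eV y d (s+1) :=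
    fun s hs => funext (eV_rotL hinj hs)
  constructor
  case tle => exact le_rfl
  case hbase =>
    refine ⟨inj_rotL hinj, ?_, ?_⟩
    · intro a ha
      rw [range_rotL] at ha
      have hne : d 0 ≠ a := fun he => ha (he ▸ ⟨0, rfl⟩)
      rw [eV_one, if_neg hne, add_zero]
      exact hD.hbase.2.1 a ha
    · intro a ha
      rw [range_rotL] at ha
      have hb := hD.hbase.2.2 a ha
      by_cases he : d 0 = a
      · rw [eV_one, if_pos he]
        have := he ▸ hb2
        omega
      · rw [eV_one, if_neg he]
        omega
  case minus =>
    intro s hs hst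
    rw [hEv s (by omega)]
    exact hD.minus (s+1) (by omega) (by omega)
  case inj =>
    intro s hs hst s' hs' hs't heq
    rw [hEv s (by omega), hEv s' (by omega)] at heq
    have := hD.inj (s+1) (by omega) (by omega) (s'+1) (by omega) (by omega) heq
    omega
  case mem =>
    intro s hs hst
    rw [hEv s (by omega), range_rotL]
    exact hD.mem (s+1) (by omega) (by omega)
  case onto =>
    intro a ha
    rw [range_rotL] at ha
    obtain ⟨s', hs', hs'0, h⟩ := hD.onto a ha
    refine ⟨s' - 1, by omega, by omega, ?_⟩
    rw [hEv (s'-1) (by omega), show s' - 1 + 1 = s' by omega]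
    exact h

lemma door_toA (hD : Door S y d 0) (hb2 : y (d 0) = S.M - 1) :
    AE S (d 0) (eV y d 1) (d ∘ Fin.succ) := by
  have hinj := hD.hbase.1
  have hEv : ∀ s : ℕ, eV (eV y d 1) (d ∘ Fin.succ) s = eV y d (s+1) :=
    fun s => funext (eV_shift hinj s)
  have hrange : ∀ a : Fin k, a ∈ Set.range (d ∘ Fin.succ) → a ∈ Set.range d := by
    rintro a ⟨s, rfl⟩; exact ⟨s.succ, rfl⟩
  have hd0 : d 0 ∉ Set.range (d ∘ Fin.succ) := by
    rintro ⟨s, hs⟩; exact (Fin.succ_ne_zero s) (hinj hs)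
  have hins : ∀ a : Fin k, a ∈ Set.range d → a ∈ insert (d 0) (Set.range (d ∘ Fin.succ)) := by
    rintro a ⟨s, rfl⟩
    induction s using Fin.cases with
    | zero => exact Set.mem_insert _ _
    | succ i => exact Set.mem_insert_of_mem _ ⟨i, rfl⟩
  constructor
  case hbase =>
    refine ⟨hinj.comp (Fin.succ_injective nn), ?_, ?_⟩
    · intro a ha
      by_cases he : d 0 = a
      · rw [eV_one, if_pos he, ← he, hb2]
        ring
      · rw [eV_one, if_neg he, add_zero]
        apply hD.hbase.2.1
        intro hmem
        rcases Set.mem_insert_iff.mp (hins a hmem) with h' | h'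
        · exact he h'.symm
        · exact ha h'
    · intro a ha
      have hne : d 0 ≠ a := fun he => hd0 (he ▸ ha)
      rw [eV_one, if_neg hne, add_zero]
      exact hD.hbase.2.2 a (hrange a ha)
  case mnotin => exact hd0
  case minus =>
    intro s hs
    rw [hEv s]
    exact hD.minus (s+1) (by omega) (by omega)
  case inj =>
    intro s hs s' hs' heq
    rw [hEv s, hEv s'] at heq
    have := hD.inj (s+1) (by omega) (by omega) (s'+1) (by omega) (by omega) heq
    omega
  case mem =>
    intro s hs
    rw [hEv s]
    exact hins _ (hD.mem (s+1) (by omega) (by omega))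
  case onto =>
    intro a ha
    have ha' : a ∈ Set.range d := by
      rcases Set.mem_insert_iff.mp ha with h' | h'
      · exact ⟨0, h'.symm⟩
      · exact hrange a h'
    obtain ⟨s', hs', hs'0, h⟩ := hD.onto a ha'
    refine ⟨s' - 1, by omega, ?_⟩
    rw [hEv (s'-1), show s' - 1 + 1 = s' by omega]
    exact h

lemma door_rotR (hD : Door S y d (nn+1)) (hb : 1 ≤ y (d ⟨nn, by omega⟩)) :
    Door S (fun b => if b = d ⟨nn, by omega⟩ then y b - 1 else y b) (rotR d) 0 := by
  have hinj := hD.hbase.1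
  have hEv : ∀ s : ℕ, 1 ≤ s → s ≤ nn + 1 →
      eV (fun b => if b = d ⟨nn, by omega⟩ then y b - 1 else y b) (rotR d) s = eV y d (s-1) :=
    fun s h1 h2 => funext (eV_rotR hinj h1 h2)
  have hlast : d ⟨nn, by omega⟩ ∈ Set.range d := ⟨_, rfl⟩
  constructor
  case tle => exact Nat.zero_le _
  case hbase =>
    refine ⟨inj_rotR hinj, ?_, ?_⟩
    · intro a ha
      rw [range_rotR] at ha
      have hne : a ≠ d ⟨nn, by omega⟩ := fun he => ha (he ▸ hlast)
      simp only [if_neg hne]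
      exact hD.hbase.2.1 a ha
    · intro a ha
      rw [range_rotR] at ha
      have hbd := hD.hbase.2.2 a ha
      by_cases he : a = d ⟨nn, by omega⟩
      · simp only [if_pos he]
        have := he ▸ hb
        omega
      · simp only [if_neg he]
        omega
  case minus =>
    intro s hs hst
    rw [hEv s (by omega) hs]
    exact hD.minus (s-1) (by omega) (by omega)
  case inj =>
    intro s hs hst s' hs' hs't heq
    rw [hEv s (by omega) hs, hEv s' (by omega) hs'] at heq
    have := hD.inj (s-1) (by omega) (by omega) (s'-1) (by omega) (by omega) heq
    omega
  case mem =>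
    intro s hs hst
    rw [hEv s (by omega) hs, range_rotR]
    exact hD.mem (s-1) (by omega) (by omega)
  case onto =>
    intro a ha
    rw [range_rotR] at ha
    obtain ⟨s', hs', hs'ne, h⟩ := hD.onto a ha
    refine ⟨s' + 1, by omega, by omega, ?_⟩
    rw [hEv (s'+1) (by omega) (by omega), show s' + 1 - 1 = s' by omega]
    exact h

lemma door_dead (hD : Door S y d (nn+1)) (hb : y (d ⟨nn, by omega⟩) = 0) : False := by
  obtain ⟨s, hs, hsne, hfst⟩ := hD.onto (d ⟨nn, by omega⟩) ⟨_, rfl⟩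
  have hvs : eV y d s (d ⟨nn, by omega⟩) = 0 := by
    rw [eV_apply_d hD.hbase.1]
    have hnlt : ¬ (((⟨nn, by omega⟩ : Fin (nn+1)) : ℕ) < s) := by
      show ¬ (nn < s)
      omega
    rw [if_neg hnlt]
    omega
  have hlabs : S.lab (eV y d s) = (d ⟨nn, by omega⟩, false) :=
    Prod.ext hfst (hD.minus s hs hsne)
  have := S.h1f (eV y d s) (grid_eV S.hM hD.hbase s) _ hlabs
  omega

lemma cons_injective {m : Fin k} {d' : Fin nn → Fin k}
    (hinj : Function.Injective d') (hm : m ∉ Set.range d') :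
    Function.Injective (Fin.cons m d' : Fin (nn+1) → Fin k) := by
  intro s s' he
  induction s using Fin.cases with
  | zero =>
    induction s' using Fin.cases with
    | zero => rfl
    | succ i =>
      rw [Fin.cons_zero, Fin.cons_succ] at he
      exact absurd ⟨i, he.symm⟩ hm
  | succ i =>
    induction s' using Fin.cases with
    | zero =>
      rw [Fin.cons_zero, Fin.cons_succ] at he
      exact absurd ⟨i, he⟩ hm
    | succ i' =>
      rw [Fin.cons_succ, Fin.cons_succ] at he
      rw [hinj he]

lemma range_cons {m : Fin k} {d' : Fin nn → Fin k} :
    Set.range (Fin.cons m d' : Fin (nn+1) → Fin k) = insert m (Set.range d') := by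
  ext a
  constructor
  · rintro ⟨s, rfl⟩
    induction s using Fin.cases with
    | zero => rw [Fin.cons_zero]; exact Set.mem_insert _ _
    | succ i => rw [Fin.cons_succ]; exact Set.mem_insert_of_mem _ ⟨i, rfl⟩
  · intro ha
    rcases Set.mem_insert_iff.mp ha with h' | h'
    · exact ⟨0, by rw [Fin.cons_zero, h']⟩
    · obtain ⟨i, hi⟩ := h'
      exact ⟨i.succ, by rw [Fin.cons_succ, hi]⟩

lemma door_fromA {m : Fin k} {yA : Fin k → ℤ} {d' : Fin nn → Fin k} (hA : AE S m yA d') :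
    Door S (fun b => if b = m then S.M - 1 else yA b) (Fin.cons m d') 0 := by
  have hinj' := hA.hbase.1
  have hyM : yA m = S.M := hA.hbase.2.1 m hA.mnotin
  have hEv : ∀ s : ℕ,
      eV (fun b => if b = m then S.M - 1 else yA b) (Fin.cons m d') (s+1) = eV yA d' s :=
    fun s => funext (eV_cons hA.mnotin hyM s)
  constructor
  case tle => exact Nat.zero_le _
  case hbase =>
    refine ⟨cons_injective hinj' hA.mnotin, ?_, ?_⟩
    · intro a ha
      rw [range_cons] at ha
      have hne : a ≠ m := fun he => ha (he ▸ Set.mem_insert _ _)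
      simp only [if_neg hne]
      apply hA.hbase.2.1
      intro hmem
      exact ha (Set.mem_insert_of_mem _ hmem)
    · intro a ha
      rw [range_cons] at ha
      rcases Set.mem_insert_iff.mp ha with h' | h'
      · simp only [if_pos h']
        have := S.hM
        omega
      · have hne : a ≠ m := fun he => hA.mnotin (he ▸ h')
        simp only [if_neg hne]
        exact hA.hbase.2.2 a h'
  case minus =>
    intro s hs hst
    rw [show s = s - 1 + 1 by omega, hEv (s-1)]
    exact hA.minus (s-1) (by omega)
  case inj =>
    intro s hs hst s' hs' hs't heq
    rw [show s = s - 1 + 1 by omega, hEv (s-1),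
      show s' = s' - 1 + 1 by omega, hEv (s'-1)] at heq
    have := hA.inj (s-1) (by omega) (s'-1) (by omega) heq
    omega
  case mem =>
    intro s hs hst
    rw [show s = s - 1 + 1 by omega, hEv (s-1), range_cons]
    exact hA.mem (s-1) (by omega)
  case onto =>
    intro a ha
    rw [range_cons] at ha
    obtain ⟨s', hs', h⟩ := hA.onto a ha
    refine ⟨s' + 1, by omega, by omega, ?_⟩
    rw [hEv s']
    exact h

/-- The door-side map of the geometric pairing. -/
noncomputable def p2FD (S : Setup k) (nn : ℕ) (q : Dt S (nn+1)) :
    (Dt S (nn+1) ⊕ At S nn) :=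
  if h0 : q.val.2.2 = 0 then
    (if hM1 : q.val.1 (q.val.2.1 0) = S.M - 1 then
      Sum.inr ⟨(q.val.2.1 0, eV q.val.1 q.val.2.1 1, q.val.2.1 ∘ Fin.succ),
        door_toA (by have hq := q.prop; rw [h0] at hq; exact hq) hM1⟩
    else
      Sum.inl ⟨(eV q.val.1 q.val.2.1 1, rotL q.val.2.1, nn+1),
        door_rotL (by have hq := q.prop; rw [h0] at hq; exact hq) (by
          have hb := (q.prop).hbase.2.2 (q.val.2.1 0) ⟨0, rfl⟩
          omega)⟩)
  else if hT : q.val.2.2 = nn + 1 then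
    (if hz : q.val.1 (q.val.2.1 ⟨nn, by omega⟩) = 0 then
      (False.elim (door_dead (by have hq := q.prop; rw [hT] at hq; exact hq) hz))
    else
      Sum.inl ⟨((fun b => if b = q.val.2.1 ⟨nn, by omega⟩ then q.val.1 b - 1 else q.val.1 b),
        rotR q.val.2.1, 0),
        door_rotR (by have hq := q.prop; rw [hT] at hq; exact hq) (by
          have hb := (q.prop).hbase.2.2 (q.val.2.1 ⟨nn, by omega⟩) ⟨_, rfl⟩
          omega)⟩)
  else
    Sum.inl ⟨(q.val.1,
      q.val.2.1 ∘ Equiv.swap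
        (⟨q.val.2.2 - 1, by have := q.prop.tle; omega⟩ : Fin (nn+1))
        (⟨q.val.2.2, by have := q.prop.tle; omega⟩ : Fin (nn+1)), q.val.2.2),
      door_swap q.prop (by omega) (by have := q.prop.tle; omega)⟩

/-- The element-side map of the geometric pairing. -/
noncomputable def p2FA (S : Setup k) (nn : ℕ) (q : At S nn) :
    (Dt S (nn+1) ⊕ At S nn) :=
  Sum.inl ⟨((fun b => if b = q.val.1 then S.M - 1 else q.val.2.1 b),
    Fin.cons q.val.1 q.val.2.2, 0), door_fromA q.prop⟩

/-- The geometric pairing between doors at level `nn+1` and full elements at level `nn`. -/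
noncomputable def p2F (S : Setup k) (nn : ℕ) :
    (Dt S (nn+1) ⊕ At S nn) → (Dt S (nn+1) ⊕ At S nn) := fun z =>
  Sum.elim (p2FD S nn) (p2FA S nn) z

end Par2

section Par2b
variable {S : Setup k} {nn : ℕ} {y : Fin k → ℤ} {d : Fin (nn+1) → Fin k}

lemma ycomp_toA (hM1 : y (d 0) = S.M - 1) :
    (fun b => if b = d 0 then S.M - 1 else eV y d 1 b) = y := by
  funext b
  by_cases hb : b = d 0
  · rw [if_pos hb, hb, hM1]
  · rw [if_neg hb, eV_one, if_neg (fun he => hb he.symm), add_zero]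

lemma dcomp_cons : Fin.cons (d 0) (d ∘ Fin.succ) = d := by
  funext s
  induction s using Fin.cases with
  | zero => rw [Fin.cons_zero]
  | succ i => rw [Fin.cons_succ]; rfl

lemma ycomp_rotLR :
    (fun b => if b = rotL d ⟨nn, by omega⟩ then eV y d 1 b - 1 else eV y d 1 b) = y := by
  funext b
  rw [rotL_apply_last]
  by_cases hb : b = d 0
  · rw [if_pos hb, hb, eV_one, if_pos rfl]; ring
  · rw [if_neg hb, eV_one, if_neg (fun he => hb he.symm), add_zero]

lemma val_rotL_last : eV y d 1 (rotL d ⟨nn, by omega⟩) = y (d 0) + 1 := by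
  rw [rotL_apply_last, eV_one, if_pos rfl]

lemma val_rotR_zero :
    (fun b => if b = d ⟨nn, by omega⟩ then y b - 1 else y b) (rotR d 0)
      = y (d ⟨nn, by omega⟩) - 1 := by
  rw [rotR_apply_zero]
  simp

lemma ycomp_rotRL :
    eV (fun b => if b = d ⟨nn, by omega⟩ then y b - 1 else y b) (rotR d) 1 = y := by
  funext b
  rw [eV_one, rotR_apply_zero]
  by_cases hb : b = d ⟨nn, by omega⟩
  · rw [if_pos hb, if_pos hb.symm, hb]; ring
  · rw [if_neg hb, if_neg (fun he => hb he.symm), add_zero]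

lemma ycomp_consA {m : Fin k} {yA : Fin k → ℤ} {d' : Fin nn → Fin k}
    (hm : m ∉ Set.range d') (hyM : yA m = S.M) :
    eV (fun b => if b = m then S.M - 1 else yA b) (Fin.cons m d') 1 = yA := by
  funext b
  have h := eV_cons (M := S.M) hm hyM 0 b
  rw [show (0:ℕ) + 1 = 1 by rfl] at h
  rw [h]
  rw [show eV yA d' 0 = yA from eV_zero]

lemma p2F_invol (S : Setup k) (nn : ℕ) (z : Dt S (nn+1) ⊕ At S nn) :
    p2F S nn (p2F S nn z) = z := by
  rcases z with q | q
  · show p2F S nn (Sum.elim (p2FD S nn) (p2FA S nn) (Sum.inl q)) = Sum.inl q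
    rw [Sum.elim_inl]
    by_cases h0 : q.val.2.2 = 0
    · by_cases hM1 : q.val.1 (q.val.2.1 0) = S.M - 1
      · rw [show p2FD S nn q = Sum.inr ⟨(q.val.2.1 0, eV q.val.1 q.val.2.1 1,
            q.val.2.1 ∘ Fin.succ),
            door_toA (by have hq := q.prop; rw [h0] at hq; exact hq) hM1⟩ from by
          rw [p2FD, dif_pos h0, dif_pos hM1]]
        show Sum.elim (p2FD S nn) (p2FA S nn) _ = _
        erw [Sum.elim_inr, p2FA]
        congr 1
        apply Subtype.ext
        refine Prod.ext ?_ (Prod.ext ?_ ?_)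
        · exact ycomp_toA hM1
        · exact dcomp_cons
        · exact h0.symm
      · rw [show p2FD S nn q = Sum.inl ⟨(eV q.val.1 q.val.2.1 1, rotL q.val.2.1, nn+1),
            door_rotL (by have hq := q.prop; rw [h0] at hq; exact hq) (by
              have hb := (q.prop).hbase.2.2 (q.val.2.1 0) ⟨0, rfl⟩
              omega)⟩ from by
          rw [p2FD, dif_pos h0, dif_neg hM1]]
        show Sum.elim (p2FD S nn) (p2FA S nn) _ = _
        erw [Sum.elim_inl, p2FD]
        rw [dif_neg (Nat.succ_ne_zero nn), dif_pos rfl]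
        have hy0 := (q.prop.hbase.2.2 (q.val.2.1 0) ⟨0, rfl⟩).1
        have hnz : ¬ (eV q.val.1 q.val.2.1 1 (rotL q.val.2.1 ⟨nn, by omega⟩) = 0) := by
          rw [val_rotL_last]
          omega
        rw [dif_neg hnz]
        congr 1
        apply Subtype.ext
        refine Prod.ext ?_ (Prod.ext ?_ ?_)
        · exact ycomp_rotLR
        · exact rotR_rotL _
        · exact h0.symm
    · by_cases hT : q.val.2.2 = nn + 1
      · by_cases hz : q.val.1 (q.val.2.1 ⟨nn, by omega⟩) = 0
        · exact absurd hz (fun hz' =>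
            door_dead (by have hq := q.prop; rw [hT] at hq; exact hq) hz')
        · rw [show p2FD S nn q = Sum.inl ⟨((fun b => if b = q.val.2.1 ⟨nn, by omega⟩
              then q.val.1 b - 1 else q.val.1 b), rotR q.val.2.1, 0),
              door_rotR (by have hq := q.prop; rw [hT] at hq; exact hq) (by
                have hb := (q.prop).hbase.2.2 (q.val.2.1 ⟨nn, by omega⟩) ⟨_, rfl⟩
                omega)⟩ from by
            rw [p2FD, dif_neg h0, dif_pos hT, dif_neg hz]]
          show Sum.elim (p2FD S nn) (p2FA S nn) _ = _
          erw [Sum.elim_inl, p2FD]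
          rw [dif_pos rfl]
          have hyb := (q.prop.hbase.2.2 (q.val.2.1 ⟨nn, by omega⟩) ⟨_, rfl⟩).2
          have hne : ¬ ((if rotR q.val.2.1 0 = q.val.2.1 ⟨nn, by omega⟩
                then q.val.1 (rotR q.val.2.1 0) - 1 else q.val.1 (rotR q.val.2.1 0))
              = S.M - 1) := by
            rw [rotR_apply_zero]
            simp only [eq_self_iff_true, if_true]
            omega
          rw [dif_neg hne]
          congr 1
          apply Subtype.ext
          refine Prod.ext ?_ (Prod.ext ?_ ?_)
          · exact ycomp_rotRL
          · exact rotL_rotR _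
          · exact hT.symm
      · rw [show p2FD S nn q = Sum.inl ⟨(q.val.1,
            q.val.2.1 ∘ Equiv.swap
              (⟨q.val.2.2 - 1, by have := q.prop.tle; omega⟩ : Fin (nn+1))
              (⟨q.val.2.2, by have := q.prop.tle; omega⟩ : Fin (nn+1)), q.val.2.2),
            door_swap q.prop (by omega) (by have := q.prop.tle; omega)⟩ from by
          rw [p2FD, dif_neg h0, dif_neg hT]]
        show Sum.elim (p2FD S nn) (p2FA S nn) _ = _
        erw [Sum.elim_inl, p2FD]
        rw [dif_neg h0, dif_neg hT]
        congr 1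
        apply Subtype.ext
        refine Prod.ext rfl (Prod.ext ?_ rfl)
        funext s
        show q.val.2.1 (Equiv.swap _ _ (Equiv.swap _ _ s)) = q.val.2.1 s
        rw [Equiv.swap_apply_self]
  · show p2F S nn (Sum.elim (p2FD S nn) (p2FA S nn) (Sum.inr q)) = Sum.inr q
    rw [Sum.elim_inr, p2FA]
    show Sum.elim (p2FD S nn) (p2FA S nn) _ = _
    erw [Sum.elim_inl, p2FD]
    rw [dif_pos rfl]
    have hyM : q.val.2.1 q.val.1 = S.M := q.prop.hbase.2.1 q.val.1 q.prop.mnotin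
    have hM1' : (if (Fin.cons q.val.1 q.val.2.2 : Fin (nn+1) → Fin k) 0 = q.val.1
        then S.M - 1 else q.val.2.1 ((Fin.cons q.val.1 q.val.2.2 : Fin (nn+1) → Fin k) 0))
        = S.M - 1 := by
      rw [Fin.cons_zero]
      simp only [eq_self_iff_true, if_true]
    rw [dif_pos hM1']
    congr 1
    apply Subtype.ext
    refine Prod.ext ?_ (Prod.ext ?_ ?_)
    · show (Fin.cons q.val.1 q.val.2.2 : Fin (nn+1) → Fin k) 0 = q.val.1
      exact Fin.cons_zero _ _
    · show eV (fun b => if b = q.val.1 then S.M - 1 else q.val.2.1 b)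
        (Fin.cons q.val.1 q.val.2.2) 1 = q.val.2.1
      exact ycomp_consA q.prop.mnotin hyM
    · show (Fin.cons q.val.1 q.val.2.2 : Fin (nn+1) → Fin k) ∘ Fin.succ = q.val.2.2
      funext i
      show (Fin.cons q.val.1 q.val.2.2 : Fin (nn+1) → Fin k) i.succ = q.val.2.2 i
      rw [Fin.cons_succ]

lemma p2F_ne (S : Setup k) (nn : ℕ) (z : Dt S (nn+1) ⊕ At S nn) : p2F S nn z ≠ z := by
  rcases z with q | q
  · show Sum.elim (p2FD S nn) (p2FA S nn) (Sum.inl q) ≠ _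
    rw [Sum.elim_inl]
    by_cases h0 : q.val.2.2 = 0
    · by_cases hM1 : q.val.1 (q.val.2.1 0) = S.M - 1
      · rw [p2FD, dif_pos h0, dif_pos hM1]
        exact fun he => Sum.inr_ne_inl he
      · rw [p2FD, dif_pos h0, dif_neg hM1]
        intro he
        have hv := congrArg (fun w : Dt S (nn+1) ⊕ At S nn =>
          match w with
          | Sum.inl r => r.val.2.2
          | Sum.inr _ => 0) he
        simp only at hv
        omega
    · by_cases hT : q.val.2.2 = nn + 1
      · by_cases hz : q.val.1 (q.val.2.1 ⟨nn, by omega⟩) = 0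
        · exact absurd hz (fun hz' =>
            door_dead (by have hq := q.prop; rw [hT] at hq; exact hq) hz')
        · rw [p2FD, dif_neg h0, dif_pos hT, dif_neg hz]
          intro he
          have hv := congrArg (fun w : Dt S (nn+1) ⊕ At S nn =>
            match w with
            | Sum.inl r => r.val.2.2
            | Sum.inr _ => 0) he
          simp only at hv
          omega
      · rw [p2FD, dif_neg h0, dif_neg hT]
        intro he
        have hv := congrArg (fun w : Dt S (nn+1) ⊕ At S nn =>
          match w with
          | Sum.inl r => r.val.2.1
          | Sum.inr _ => q.val.2.1) he
        simp only at hv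
        have ht := q.prop.tle
        have hv2 := congrFun hv (⟨q.val.2.2 - 1, by omega⟩ : Fin (nn+1))
        rw [show (q.val.2.1 ∘ Equiv.swap (⟨q.val.2.2 - 1, by omega⟩ : Fin (nn+1))
            (⟨q.val.2.2, by omega⟩ : Fin (nn+1))) (⟨q.val.2.2 - 1, by omega⟩ : Fin (nn+1))
            = q.val.2.1 (⟨q.val.2.2, by omega⟩ : Fin (nn+1)) from by
          show q.val.2.1 (Equiv.swap _ _ _) = _
          rw [Equiv.swap_apply_left]] at hv2
        have hval := q.prop.hbase.1 hv2
        have hvv := congrArg Fin.val hval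
        simp only at hvv
        omega
  · show Sum.elim (p2FD S nn) (p2FA S nn) (Sum.inr q) ≠ _
    rw [Sum.elim_inr, p2FA]
    exact fun he => Sum.inl_ne_inr he

lemma par2 (S : Setup k) (nn : ℕ) : Even (Nat.card (Dt S (nn+1) ⊕ At S nn)) :=
  even_card_of_invol (p2F S nn) (p2F_invol S nn) (p2F_ne S nn)

end Par2b

theorem setup_false (S : Setup k) : False := by
  have step : ∀ nn : ℕ, Even (Nat.card (At S (nn+1))) → Even (Nat.card (At S nn)) := by
    intro nn h
    have e1 := even_sum_transfer (par1 S (nn+1))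
    have e2 := even_sum_transfer (par2 S nn)
    exact e2.mp (e1.mpr h)
  have main : ∀ i : ℕ, i ≤ k → Even (Nat.card (At S (k - i))) := by
    intro i
    induction i with
    | zero =>
      intro _
      rw [Nat.sub_zero, card_At_top S]
      exact Even.zero
    | succ i ih =>
      intro hik
      have hrw : k - i = (k - (i+1)) + 1 := by omega
      have h := ih (by omega)
      rw [hrw] at h
      exact step _ h
  have h0 := main k le_rfl
  rw [Nat.sub_self, card_At_zero S] at h0
  exact Nat.not_even_one h0

/-- Adjacency-with-same-colour relation on the grid. -/
def Rel (c : (Fin k → ℤ) → Fin k) (m : ℤ) (i : Fin k) (p q : Fin k → ℤ) : Prop :=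
  (∀ a, 0 ≤ p a ∧ p a ≤ 2*m) ∧ (∀ a, 0 ≤ q a ∧ q a ≤ 2*m) ∧ c p = i ∧ c q = i ∧
    (∀ a, |p a - q a| ≤ 1)

/-- `p` is reachable from the bottom face in direction `i` through colour-`i` points. -/
def Reach (c : (Fin k → ℤ) → Fin k) (m : ℤ) (i : Fin k) (p : Fin k → ℤ) : Prop :=
  (∀ a, 0 ≤ p a ∧ p a ≤ 2*m) ∧ c p = i ∧ ∃ p₀, (∀ a, 0 ≤ p₀ a ∧ p₀ a ≤ 2*m) ∧
    c p₀ = i ∧ p₀ i = 0 ∧ Relation.ReflTransGen (Rel c m i) p₀ p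

end NoCoverAux

/-- Lemma 2.6: there are no `n`-disjoint, `R`-bounded families `V₁,…,V_k` in `ℤ^k`
(with the maximum metric) covering `[-R,R]^k ∩ ℤ^k`, when `n > 2` and `R > n`. -/
theorem no_cover_of_cube (k n : ℕ) (hn : 2 < n) (R : ℝ) (hR : (n : ℝ) < R) :
    ¬ ∃ V : Fin k → Set (Set (Fin k → ℤ)),
      (∀ i, RDisjoint (n : ℝ) (V i)) ∧ (∀ i, RBounded R (V i)) ∧
      {x : Fin k → ℤ | ∀ i, |(x i : ℝ)| ≤ R} ⊆ ⋃ i, ⋃₀ V i := by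
  classical
  rintro ⟨V, hdisj, hbdd, hcov⟩
  rcases Nat.eq_zero_or_pos k with hk0 | hk
  · subst hk0
    have hx : (fun _ : Fin 0 => (0:ℤ)) ∈ {x : Fin 0 → ℤ | ∀ i, |(x i : ℝ)| ≤ R} := by
      intro i
      exact i.elim0
    have hmem := hcov hx
    simp only [Set.mem_iUnion] at hmem
    obtain ⟨i, -⟩ := hmem
    exact i.elim0
  · have : Nonempty (Fin k) := ⟨⟨0, hk⟩⟩
    set m : ℤ := ⌊R⌋ with hmdef
    have hn3 : (3 : ℝ) ≤ (n : ℝ) := by exact_mod_cast hn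
    have hm3 : 3 ≤ m := by
      rw [hmdef]
      apply Int.le_floor.mpr
      push_cast
      linarith
    have hmR : (m : ℝ) ≤ R := Int.floor_le R
    have hfl : R - 1 < (m : ℝ) := Int.sub_one_lt_floor R
    have h2m : R < 2 * (m : ℝ) := by
      have hm3' : (3:ℝ) ≤ (m:ℝ) := by exact_mod_cast hm3
      linarith
    -- coordinatewise distance facts
    have dist_coord : ∀ (x y : Fin k → ℤ) (i : Fin k),
        |((x i : ℝ)) - (y i : ℝ)| ≤ dist x y := by
      intro x y i
      have h := dist_le_pi_dist x y i
      rwa [Int.dist_eq] at h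
    have dist_le_one' : ∀ x y : Fin k → ℤ, (∀ a, |x a - y a| ≤ (1:ℤ)) → dist x y ≤ 1 := by
      intro x y h
      rw [dist_pi_le_iff (by norm_num)]
      intro b
      rw [Int.dist_eq]
      have h2 : ((|x b - y b| : ℤ) : ℝ) ≤ 1 := by exact_mod_cast h b
      rwa [Int.cast_abs, Int.cast_sub] at h2
    -- choice of colours and witnessing sets
    have hex : ∀ p : Fin k → ℤ, (∀ a, 0 ≤ p a ∧ p a ≤ 2*m) →
        ∃ i u, u ∈ V i ∧ (fun a => p a - m) ∈ u := by
      intro p hp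
      have hmem : (fun a => p a - m) ∈ {x : Fin k → ℤ | ∀ i, |(x i : ℝ)| ≤ R} := by
        intro i
        show |((p i - m : ℤ) : ℝ)| ≤ R
        have h1 := (hp i).1
        have h2 := (hp i).2
        have h1' : (0:ℝ) ≤ (p i : ℝ) := by exact_mod_cast h1
        have h2' : (p i : ℝ) ≤ 2 * (m:ℝ) := by exact_mod_cast h2
        rw [abs_le]
        push_cast
        constructor <;> linarith
      have hm2 := hcov hmem
      simp only [Set.mem_iUnion, Set.mem_sUnion] at hm2
      obtain ⟨i, u, hu, hx⟩ := hm2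
      exact ⟨i, u, hu, hx⟩
    choose! c U hUV hUm using hex
    -- a colour-i chain stays within a single element of V i
    have chain_mem : ∀ (i : Fin k) (p₀ p : Fin k → ℤ),
        Relation.ReflTransGen (NoCoverAux.Rel c m i) p₀ p →
        ∀ W ∈ V i, (fun a => p₀ a - m) ∈ W → (fun a => p a - m) ∈ W := by
      intro i p₀ p h W hW h0
      induction h with
      | refl => exact h0
      | tail hab hbc ih =>
        rename_i b cc
        obtain ⟨hGb, hGc, hcb, hcc, hadj⟩ := hbc
        have hUc : U cc ∈ V i := by rw [← hcc]; exact hUV cc hGc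
        have hmemc : (fun a => cc a - m) ∈ U cc := hUm cc hGc
        by_cases heq : U cc = W
        · rwa [heq] at hmemc
        · exfalso
          have hdist := hdisj i W hW (U cc) hUc (Ne.symm heq) _ ih _ hmemc
          have hle : dist (fun a => b a - m) (fun a => cc a - m) ≤ 1 := by
            apply dist_le_one'
            intro a
            have h4 := hadj a
            show |(b a - m) - (cc a - m)| ≤ 1
            have h3 : b a - m - (cc a - m) = b a - cc a := by ring
            rw [h3]
            exact h4
          have hn1 : (1:ℝ) < (n:ℝ) := by linarith
          linarith
    -- no colour-i chain from the bottom face reaches the top face in direction i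
    have no_span : ∀ (i : Fin k) (p : Fin k → ℤ),
        NoCoverAux.Reach c m i p → p i < 2*m := by
      intro i p hr
      obtain ⟨hGp, hcp, p₀, hGp₀, hcp₀, hp₀i, hchain⟩ := hr
      by_contra hge
      have hpi : p i = 2*m := by
        have := (hGp i).2
        omega
      have hU0 : U p₀ ∈ V i := by rw [← hcp₀]; exact hUV p₀ hGp₀
      have hm0 : (fun a => p₀ a - m) ∈ U p₀ := hUm p₀ hGp₀
      have hmp : (fun a => p a - m) ∈ U p₀ := chain_mem i p₀ p hchain _ hU0 hm0
      have hdle := hbdd i (U p₀) hU0 _ hm0 _ hmp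
      have hgec := dist_coord (fun a => p₀ a - m) (fun a => p a - m) i
      have hval : |(((p₀ i - m) : ℤ) : ℝ) - (((p i - m) : ℤ) : ℝ)| = 2 * (m:ℝ) := by
        rw [hp₀i, hpi]
        push_cast
        rw [abs_of_nonpos (by
          have hm3' : (3:ℝ) ≤ (m:ℝ) := by exact_mod_cast hm3
          linarith)]
        ring
      rw [hval] at hgec
      linarith
    -- build the labelling setup
    set S : NoCoverAux.Setup k :=
      { M := 2*m
        lab := fun p => (c p, if NoCoverAux.Reach c m (c p) p then true else false)
        hM := by omega
        h1t := by
          intro x hx i hlab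
          simp only [Prod.mk.injEq] at hlab
          obtain ⟨hci, hif⟩ := hlab
          have hreach : NoCoverAux.Reach c m (c x) x := by
            by_contra hnr
            rw [if_neg hnr] at hif
            exact Bool.noConfusion hif
          have hns := no_span (c x) x hreach
          rw [hci] at hns
          exact hns
        h1f := by
          intro x hx i hlab
          simp only [Prod.mk.injEq] at hlab
          obtain ⟨hci, hif⟩ := hlab
          have hnreach : ¬ NoCoverAux.Reach c m (c x) x := by
            intro hr
            rw [if_pos hr] at hif
            exact Bool.noConfusion hif
          rcases lt_or_eq_of_le (hx i).1 with h | h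
          · exact h
          · exfalso
            apply hnreach
            refine ⟨hx, rfl, x, hx, rfl, ?_, Relation.ReflTransGen.refl⟩
            rw [hci]
            omega
        h2 := by
          intro x y hx hy hadj i hlabx hlaby
          simp only [Prod.mk.injEq] at hlabx hlaby
          obtain ⟨hcx, hifx⟩ := hlabx
          obtain ⟨hcy, hify⟩ := hlaby
          have hreachx : NoCoverAux.Reach c m (c x) x := by
            by_contra hnr
            rw [if_neg hnr] at hifx
            exact Bool.noConfusion hifx
          have hnreachy : ¬ NoCoverAux.Reach c m (c y) y := by
            intro hr
            rw [if_pos hr] at hify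
            exact Bool.noConfusion hify
          apply hnreachy
          obtain ⟨hGx, hcx', p₀, hGp₀, hcp₀, hp₀i, hchain⟩ := hreachx
          refine ⟨hy, rfl, p₀, hGp₀, ?_, ?_, ?_⟩
          · rw [hcp₀, hcx, hcy]
          · have hcxy : c x = c y := hcx.trans hcy.symm
            rw [← hcxy]
            exact hp₀i
          · have hrel : NoCoverAux.Rel c m (c y) x y := by
              refine ⟨hGx, hy, ?_, rfl, hadj⟩
              rw [hcx, hcy]
            have hchain' : Relation.ReflTransGen (NoCoverAux.Rel c m (c y)) p₀ x := by
              have hcxy : c x = c y := by rw [hcx, hcy]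
              rwa [← hcxy]
            exact hchain'.tail hrel }
    exact NoCoverAux.setup_false S
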